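/- Let G be a topological group containing a topologically simple open subgroup S with trivial quasi-centre, such that QZ(G) = 1. Then every non-trivial closed normal subgroup N of G contains S. Consequently, the intersection M of all non-trivial closed normal subgroups of G contains S and is open in G. -/

import Mathlib

/-- If `G` has trivial quasi-centre and contains a non-trivial topologically simple
open subgroup `S` with trivial quasi-centre, then every non-trivial closed normal
subgroup of `G` contains `S`; consequently the intersection `M` of all non-trivial
closed normal subgroups of `G` contains `S` and is open. -/
theorem monolith_contains_simple_open_subgroup
    {G : Type*} [Group G] [TopologicalSpace G] [IsTopologicalGroup G]
    (S : Subgroup G) (hSopen : IsOpen (S : Set G)) (hSnontriv : S ≠ ⊥)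
    (hSsimple : ∀ N : Subgroup S, N.Normal → IsClosed (N : Set S) → N = ⊥ ∨ N = ⊤)
    (hQZS : ∀ u : S, IsOpen ((Subgroup.centralizer {u} : Subgroup S) : Set S) → u = 1)
    (hQZG : ∀ g : G, IsOpen ((Subgroup.centralizer {g} : Subgroup G) : Set G) → g = 1) :
    (∀ N : Subgroup G, N.Normal → IsClosed (N : Set G) → N ≠ ⊥ → S ≤ N) ∧
    S ≤ sInf {N : Subgroup G | N.Normal ∧ IsClosed (N : Set G) ∧ N ≠ ⊥} ∧
    IsOpen ((sInf {N : Subgroup G | N.Normal ∧ IsClosed (N : Set G) ∧ N ≠ ⊥} :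
      Subgroup G) : Set G) := by
  have key : ∀ N : Subgroup G, N.Normal → IsClosed (N : Set G) → N ≠ ⊥ → S ≤ N := by
    intro N hNnorm hNclosed hNne
    set N' : Subgroup S := N.comap S.subtype with hN'def
    have hN'norm : N'.Normal := by
      constructor
      intro n hn g
      simp only [hN'def, Subgroup.mem_comap] at hn ⊢
      exact hNnorm.conj_mem _ hn _
    have hN'closed : IsClosed (N' : Set S) :=
      hNclosed.preimage continuous_subtype_val
    have hN'ne : N' ≠ ⊥ := by
      intro hbot
      apply hNne
      ext n
      simp only [Subgroup.mem_bot]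
      constructor
      · intro hn
        have hcent : IsOpen ((Subgroup.centralizer {n} : Subgroup G) : Set G) := by
          have hf : Continuous (fun g : G => g * n * g⁻¹ * n⁻¹) := by continuity
          have hU : IsOpen ((fun g : G => g * n * g⁻¹ * n⁻¹) ⁻¹' (S : Set G)) :=
            hSopen.preimage hf
          have h1 : (1 : G) ∈ (fun g : G => g * n * g⁻¹ * n⁻¹) ⁻¹' (S : Set G) := by
            simp [S.one_mem]
          apply Subgroup.isOpen_of_mem_nhds (g := (1 : G))
          apply Filter.mem_of_superset (hU.mem_nhds h1)
          intro g hg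
          have hfgS : g * n * g⁻¹ * n⁻¹ ∈ S := hg
          have hfgN : g * n * g⁻¹ * n⁻¹ ∈ N :=
            N.mul_mem (hNnorm.conj_mem _ hn _) (N.inv_mem hn)
          have : (⟨g * n * g⁻¹ * n⁻¹, hfgS⟩ : S) ∈ N' := hfgN
          rw [hbot, Subgroup.mem_bot] at this
          have heq : g * n * g⁻¹ * n⁻¹ = 1 := congrArg Subtype.val this
          rw [SetLike.mem_coe, Subgroup.mem_centralizer_iff]
          intro x hx
          rw [Set.mem_singleton_iff] at hx
          subst hx
          have h2 : g * x * g⁻¹ = x := mul_inv_eq_one.mp heq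
          calc x * g = (g * x * g⁻¹) * g := by rw [h2]
            _ = g * x := by group
        exact hQZG n hcent
      · rintro rfl; exact N.one_mem
    rcases hSsimple N' hN'norm hN'closed with h | h
    · exact absurd h hN'ne
    · intro s hs
      have : (⟨s, hs⟩ : S) ∈ N' := h ▸ Subgroup.mem_top _
      exact this
  refine ⟨key, ?_, ?_⟩
  · exact le_sInf fun N hN => key N hN.1 hN.2.1 hN.2.2
  · exact Subgroup.isOpen_mono (le_sInf fun N hN => key N hN.1 hN.2.1 hN.2.2) hSopen
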